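/- Let A ∈ F^{m×n} be a matrix over a field F, and let I ⊆ [m], J ⊆ [n]. Then A_{I,J} is a nonsingular submatrix with |I| = |J| = rank(A) if and only if the rows of A indexed by I form a basis of the row space of A and the columns of A indexed by J form a basis of the column space of A. -/

import Mathlib

open Matrix Submodule Set Module

section aux
set_option linter.unusedSectionVars false
variable {F : Type*} [Field F] {m n : ℕ}

lemma range_rows_sub (A : Matrix (Fin m) (Fin n) F) (I : Finset (Fin m)) :
    Set.range (A.submatrix (fun i : {x // x ∈ I} => (i : Fin m)) id) = A '' ↑I := by
  have : A.submatrix (fun i : {x // x ∈ I} => (i : Fin m)) id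
      = A ∘ (fun i : {x // x ∈ I} => (i : Fin m)) := rfl
  rw [this]
  exact (Set.image_eq_range _ _).symm

lemma span_range_sub (A : Matrix (Fin m) (Fin n) F) (I : Finset (Fin m)) (J : Finset (Fin n)) :
    Submodule.span F (Set.range (A.submatrix
        (fun i : {x // x ∈ I} => (i : Fin m))
        (fun j : {x // x ∈ J} => (j : Fin n)))) =
    Submodule.map (LinearMap.funLeft F F (fun j : {x // x ∈ J} => (j : Fin n)))
      (Submodule.span F (A '' ↑I)) := by
  rw [← range_rows_sub A I, Submodule.map_span]
  erw [← Set.range_comp]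
  rfl

/-- rows-of-`I` submatrix viewed as rows equals `fun i : I => A i`. -/
lemma rows_sub_eq (A : Matrix (Fin m) (Fin n) F) (I : Finset (Fin m)) :
    (A.submatrix (fun i : {x // x ∈ I} => (i : Fin m)) id)
      = fun i : {x // x ∈ I} => A (i : Fin m) := rfl

/-- Forward half: from `|I| = rank A` and full rank of the submatrix, deduce that the
rows indexed by `I` are a row basis. -/
lemma aux_fwd (A : Matrix (Fin m) (Fin n) F) (I : Finset (Fin m)) (J : Finset (Fin n))
    (hI : I.card = A.rank)
    (hC : (A.submatrix (fun i : {x // x ∈ I} => (i : Fin m))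
        (fun j : {x // x ∈ J} => (j : Fin n))).rank = I.card) :
    (LinearIndependent F fun i : {x // x ∈ I} => A (i : Fin m)) ∧
      Submodule.span F (A '' ↑I) = Submodule.span F (Set.range A) := by
  set C := A.submatrix (fun i : {x // x ∈ I} => (i : Fin m))
      (fun j : {x // x ∈ J} => (j : Fin n)) with hCdef
  -- rank C = finrank of map of span (A '' I)
  have h1 : C.rank = finrank F (Submodule.map
      (LinearMap.funLeft F F (fun j : {x // x ∈ J} => (j : Fin n)))
      (Submodule.span F (A '' ↑I))) := by
    rw [Matrix.rank_eq_finrank_span_row, ← span_range_sub]; rfl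
  have h2 : C.rank ≤ finrank F (Submodule.span F (A '' ↑I)) := by
    rw [h1]; exact Submodule.finrank_map_le _ _
  -- finrank span (A '' I) ≤ I.card
  have h3 : finrank F (Submodule.span F (A '' ↑I)) ≤ I.card := by
    rw [← range_rows_sub A I, show Set.range (A.submatrix (fun i : {x // x ∈ I} => (i : Fin m)) id)
      = Set.range (A.submatrix (fun i : {x // x ∈ I} => (i : Fin m)) id).row from rfl,
      ← Matrix.rank_eq_finrank_span_row]
    calc (A.submatrix (fun i : {x // x ∈ I} => (i : Fin m)) id).rank
        ≤ Fintype.card {x // x ∈ I} := Matrix.rank_le_card_height _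
      _ = I.card := Fintype.card_coe I
  have hfin : finrank F (Submodule.span F (A '' ↑I)) = I.card :=
    le_antisymm h3 (by rw [← hC]; exact h2)
  constructor
  · rw [linearIndependent_iff_card_eq_finrank_span]
    have : Set.range (fun i : {x // x ∈ I} => A (i : Fin m)) = A '' ↑I := by
      rw [← rows_sub_eq, range_rows_sub]
    rw [Set.finrank, this, hfin, Fintype.card_coe]
  · have hle : Submodule.span F (A '' ↑I) ≤ Submodule.span F (Set.range A) :=
      Submodule.span_mono (Set.image_subset_range _ _)
    exact Submodule.eq_of_le_of_finrank_eq hle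
      (by rw [hfin, hI, Matrix.rank_eq_finrank_span_row]; rfl)

/-- Backward half, cardinality: a row basis has `rank A` elements. -/
lemma aux_card (A : Matrix (Fin m) (Fin n) F) (I : Finset (Fin m))
    (hind : LinearIndependent F fun i : {x // x ∈ I} => A (i : Fin m))
    (hsp : Submodule.span F (A '' ↑I) = Submodule.span F (Set.range A)) :
    I.card = A.rank := by
  have : Set.range (fun i : {x // x ∈ I} => A (i : Fin m)) = A '' ↑I := by
    rw [← rows_sub_eq, range_rows_sub]
  have h := linearIndependent_iff_card_eq_finrank_span.mp hind
  rw [Set.finrank, this, hsp] at h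
  rw [← Fintype.card_coe, h, Matrix.rank_eq_finrank_span_row]
  rfl

/-- Backward half, rank of the submatrix. -/
lemma aux_rank (A : Matrix (Fin m) (Fin n) F) (I : Finset (Fin m)) (J : Finset (Fin n))
    (hspI : Submodule.span F (A '' ↑I) = Submodule.span F (Set.range A))
    (hindJ : LinearIndependent F fun j : {x // x ∈ J} => Matrix.transpose A (j : Fin n)) :
    (A.submatrix (fun i : {x // x ∈ I} => (i : Fin m))
        (fun j : {x // x ∈ J} => (j : Fin n))).rank = J.card := by
  rw [Matrix.rank_eq_finrank_span_row, show Set.range (A.submatrix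
      (fun i : {x // x ∈ I} => (i : Fin m)) (fun j : {x // x ∈ J} => (j : Fin n))).row
      = Set.range (A.submatrix (fun i : {x // x ∈ I} => (i : Fin m))
      (fun j : {x // x ∈ J} => (j : Fin n))) from rfl, span_range_sub, hspI, Submodule.map_span]
  erw [← Set.range_comp]
  have hr : Set.range ((fun v : Fin n → F =>
        v ∘ (fun j : {x // x ∈ J} => (j : Fin n))) ∘ A)
      = Set.range (Aᵀ.submatrix (fun j : {x // x ∈ J} => (j : Fin n)) id)ᵀ := rfl
  rw [show (LinearMap.funLeft F F (fun j : {x // x ∈ J} => (j : Fin n)) : (Fin n → F) → _) ∘ A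
      = fun i => (Aᵀ.submatrix (fun j : {x // x ∈ J} => (j : Fin n)) id)ᵀ i from rfl]
  rw [show (Set.range fun i => (Aᵀ.submatrix (fun j : {x // x ∈ J} => (j : Fin n)) id)ᵀ i)
      = Set.range (Aᵀ.submatrix (fun j : {x // x ∈ J} => (j : Fin n)) id).col from rfl]
  rw [← Matrix.rank_eq_finrank_span_cols, rows_sub_eq]
  exact hindJ.rank_matrix.trans (Fintype.card_coe J)

end aux

theorem nonsingular_submatrix_iff_bases {F : Type*} [Field F] {m n : ℕ}
    (A : Matrix (Fin m) (Fin n) F) (I : Finset (Fin m)) (J : Finset (Fin n)) :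
    (I.card = A.rank ∧ J.card = A.rank ∧
      (A.submatrix (fun i : {x // x ∈ I} => (i : Fin m))
        (fun j : {x // x ∈ J} => (j : Fin n))).rank = I.card) ↔
    ((LinearIndependent F fun i : {x // x ∈ I} => A (i : Fin m)) ∧
      Submodule.span F (A '' ↑I) = Submodule.span F (Set.range A) ∧
      (LinearIndependent F fun j : {x // x ∈ J} => Matrix.transpose A (j : Fin n)) ∧
      Submodule.span F (Matrix.transpose A '' ↑J) =
        Submodule.span F (Set.range (Matrix.transpose A))) := by
  constructor
  · rintro ⟨hI, hJ, hC⟩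
    obtain ⟨h1, h2⟩ := aux_fwd A I J hI hC
    have hCT : (Aᵀ.submatrix (fun j : {x // x ∈ J} => (j : Fin n))
        (fun i : {x // x ∈ I} => (i : Fin m))).rank = J.card := by
      have : (Aᵀ.submatrix (fun j : {x // x ∈ J} => (j : Fin n))
          (fun i : {x // x ∈ I} => (i : Fin m)))
          = (A.submatrix (fun i : {x // x ∈ I} => (i : Fin m))
            (fun j : {x // x ∈ J} => (j : Fin n)))ᵀ := rfl
      rw [this, Matrix.rank_transpose, hC, hI, ← hJ]
    obtain ⟨h3, h4⟩ := aux_fwd Aᵀ J I (by rw [hJ, Matrix.rank_transpose]) hCT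
    exact ⟨h1, h2, h3, h4⟩
  · rintro ⟨h1, h2, h3, h4⟩
    have hI := aux_card A I h1 h2
    have hJ := aux_card Aᵀ J h3 h4
    rw [Matrix.rank_transpose] at hJ
    exact ⟨hI, hJ, (aux_rank A I J h2 h3).trans (hJ.trans hI.symm)⟩
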